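/- Let m ∈ ℕ^n and let p, q ∈ F[α_1,…,α_n] be polynomials whose coefficient at the monomial α^m equals 1 and all of whose other monomials appearing with nonzero coefficient in p or q are strictly smaller than α^m in the graded lexicographic order (total degree first, ties broken lexicographically with α_1 ≻ α_2 ≻ ⋯ ≻ α_n). Writing p_i and q_i for the coefficients of p and q at a multi-index i, one has Spr_σ(p,q) = ⋂_{i} Spr_σ(α^m + p_i·α^i, α^m + q_i·α^i), where the intersection ranges over all multi-indices i ≠ m with α^i strictly smaller than α^m in the graded lexicographic order and p_i ≠ 0 or q_i ≠ 0 (an empty intersection being ℤ). -/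

import Mathlib

open MvPolynomial

/-- The spread set `Spr_σ(p,q) = {k ∈ ℤ | σᵏ(p) = c·q for some c ∈ F∖{0}}`. -/
def Spr {F : Type*} [Field F] {n : ℕ}
    (σ : MvPolynomial (Fin n) F ≃ₐ[F] MvPolynomial (Fin n) F)
    (p q : MvPolynomial (Fin n) F) : Set ℤ :=
  {k : ℤ | ∃ c : F, c ≠ 0 ∧ (σ ^ k) p = C c * q}

/-- `grlexLt i m` says that the monomial `α^i` is strictly smaller than `α^m` in the
graded lexicographic order: first compare total degrees, ties broken lexicographically
with `α₁ ≻ α₂ ≻ ⋯ ≻ αₙ` (i.e. at the first index where the exponent vectors differ,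
`i` has the smaller exponent). -/
def grlexLt {n : ℕ} (i m : Fin n →₀ ℕ) : Prop :=
  (∑ t, i t) < (∑ t, m t) ∨
  ((∑ t, i t) = (∑ t, m t) ∧ ∃ t, i t < m t ∧ ∀ s, s < t → i s = m s)

/-- Let `σ` be the `F`-algebra automorphism of `F[α₁,…,αₙ]` with
`σ(αᵢ) = λᵢ αᵢ` (all `λᵢ` nonzero). Let `p, q` have coefficient `1` at the monomial `α^m`
and suppose every other monomial occurring in `p` or `q` is strictly smaller than `α^m`
in the graded lexicographic order. Then
`Spr_σ(p,q) = ⋂ᵢ Spr_σ(α^m + pᵢ·αⁱ, α^m + qᵢ·αⁱ)`, the intersection ranging over all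
multi-indices `i ≠ m` at which `p` or `q` has a nonzero coefficient (an empty
intersection being all of ℤ). -/
lemma aux_sigma_C {F : Type*} [Field F] {n : ℕ}
    (σ : MvPolynomial (Fin n) F ≃ₐ[F] MvPolynomial (Fin n) F) (c : F) :
    σ (C c) = C c := by
  have := σ.commutes c
  simpa [algebraMap_eq] using this

lemma aux_sigma_monomial {F : Type*} [Field F] {n : ℕ}
    (lam : Fin n → F)
    (σ : MvPolynomial (Fin n) F ≃ₐ[F] MvPolynomial (Fin n) F)
    (hσ : ∀ i, σ (X i) = C (lam i) * X i)
    (v : Fin n →₀ ℕ) (c : F) :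
    σ (monomial v c) = monomial v ((∏ t, lam t ^ v t) * c) := by
  rw [monomial_eq, monomial_eq, Finsupp.prod_fintype _ _ (fun i => pow_zero _)]
  rw [map_mul, aux_sigma_C, map_prod]
  simp only [map_pow, hσ, mul_pow]
  simp only [← C_pow]
  rw [Finset.prod_mul_distrib, ← map_prod, ← mul_assoc, ← map_mul, mul_comm c]

lemma aux_sigma_pow_monomial {F : Type*} [Field F] {n : ℕ}
    (lam : Fin n → F) (hlam : ∀ i, lam i ≠ 0)
    (σ : MvPolynomial (Fin n) F ≃ₐ[F] MvPolynomial (Fin n) F)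
    (hσ : ∀ i, σ (X i) = C (lam i) * X i)
    (k : ℤ) (v : Fin n →₀ ℕ) (c : F) :
    (σ ^ k) (monomial v c)
      = monomial v ((((∏ t, Units.mk0 (lam t) (hlam t) ^ v t) ^ k : Fˣ) : F) * c) := by
  set W : Fˣ := ∏ t, Units.mk0 (lam t) (hlam t) ^ v t with hW
  have hWF : (W : F) = ∏ t, lam t ^ v t := by
    rw [hW]; push_cast; rfl
  have hnat : ∀ (j : ℕ) (c : F), (σ ^ j) (monomial v c)
      = monomial v (((W ^ j : Fˣ) : F) * c) := by
    intro j
    induction j with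
    | zero => intro c; simp
    | succ j ih =>
      intro c
      have : (σ ^ (j + 1)) (monomial v c) = (σ ^ j) (σ (monomial v c)) := by
        rw [pow_succ]; rfl
      rw [this, aux_sigma_monomial lam σ hσ, ih, ← hWF]
      push_cast [pow_succ]
      ring_nf
  cases k with
  | ofNat j => simpa using hnat j c
  | negSucc j =>
    have he : σ ^ (Int.negSucc j) = ((σ ^ (j + 1))⁻¹ : _) := zpow_negSucc σ j
    rw [he]
    have : ((σ ^ (j + 1))⁻¹ : MvPolynomial (Fin n) F ≃ₐ[F] MvPolynomial (Fin n) F)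
        = (σ ^ (j + 1)).symm := rfl
    rw [this, AlgEquiv.symm_apply_eq, hnat (j + 1)]
    congr 1
    have : ((W ^ (Int.negSucc j) : Fˣ) : F) = ((W ^ (j+1) : Fˣ)⁻¹ : Fˣ) := by
      rw [zpow_negSucc]
    rw [this]
    rw [← mul_assoc, ← Units.val_mul, mul_inv_cancel, Units.val_one, one_mul]

lemma aux_coeff_pow {F : Type*} [Field F] {n : ℕ}
    (lam : Fin n → F) (hlam : ∀ i, lam i ≠ 0)
    (σ : MvPolynomial (Fin n) F ≃ₐ[F] MvPolynomial (Fin n) F)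
    (hσ : ∀ i, σ (X i) = C (lam i) * X i)
    (k : ℤ) (v : Fin n →₀ ℕ) (f : MvPolynomial (Fin n) F) :
    coeff v ((σ ^ k) f)
      = (((∏ t, Units.mk0 (lam t) (hlam t) ^ v t) ^ k : Fˣ) : F) * coeff v f := by
  induction f using MvPolynomial.induction_on' with
  | monomial w c =>
    rw [aux_sigma_pow_monomial lam hlam σ hσ, coeff_monomial, coeff_monomial]
    split
    · next h => subst h; rfl
    · simp
  | add f g hf hg => simp [map_add, coeff_add, hf, hg, mul_add]

theorem stmt_6' {F : Type*} [Field F] [Algebra F (AlgebraicClosure ℚ)]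
    {n : ℕ} (hn : 1 ≤ n)
    (lam : Fin n → F) (hlam : ∀ i, lam i ≠ 0)
    (σ : MvPolynomial (Fin n) F ≃ₐ[F] MvPolynomial (Fin n) F)
    (hσ : ∀ i, σ (X i) = C (lam i) * X i)
    (m : Fin n →₀ ℕ) (p q : MvPolynomial (Fin n) F)
    (hpm : coeff m p = 1) (hqm : coeff m q = 1) :
    {k : ℤ | ∃ c : F, c ≠ 0 ∧ (σ ^ k) p = C c * q} = ⋂ v ∈ (p.support ∪ q.support).erase m,
      {k : ℤ | ∃ c : F, c ≠ 0 ∧ (σ ^ k) (monomial m (1 : F) + monomial v (coeff v p))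
            = C c * (monomial m (1 : F) + monomial v (coeff v q))} := by
  set u : Fin n → Fˣ := fun t => Units.mk0 (lam t) (hlam t) with hu
  set W : (Fin n →₀ ℕ) → Fˣ := fun v => ∏ t, u t ^ v t with hWdef
  have hcf : ∀ (k : ℤ) (v : Fin n →₀ ℕ) (f : MvPolynomial (Fin n) F),
      coeff v ((σ ^ k) f) = ((W v ^ k : Fˣ) : F) * coeff v f :=
    fun k v f => aux_coeff_pow lam hlam σ hσ k v f
  ext k
  simp only [Set.mem_iInter, Set.mem_setOf_eq]
  constructor
  · rintro ⟨c, hc0, hck⟩ v hv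
    have hvm : v ≠ m := (Finset.ne_of_mem_erase hv)
    have hm : ((W m ^ k : Fˣ) : F) = c := by
      have := congrArg (coeff m) hck
      rw [hcf, coeff_C_mul, hpm, hqm, mul_one, mul_one] at this
      exact this
    have hv' : ((W v ^ k : Fˣ) : F) * coeff v p = c * coeff v q := by
      have := congrArg (coeff v) hck
      rw [hcf, coeff_C_mul] at this
      exact this
    refine ⟨c, hc0, ?_⟩
    rw [map_add, aux_sigma_pow_monomial lam hlam σ hσ, aux_sigma_pow_monomial lam hlam σ hσ,
      mul_add, C_mul_monomial, C_mul_monomial]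
    rw [show (∏ t, Units.mk0 (lam t) (hlam t) ^ m t) = W m from rfl,
      show (∏ t, Units.mk0 (lam t) (hlam t) ^ v t) = W v from rfl, hm, hv', mul_one]
  · intro h
    refine ⟨((W m ^ k : Fˣ) : F), Units.ne_zero _, ?_⟩
    apply MvPolynomial.ext
    intro w
    rw [hcf, coeff_C_mul]
    by_cases hwm : w = m
    · subst hwm; rw [hpm, hqm]
    by_cases hw : w ∈ p.support ∪ q.support
    · obtain ⟨c', hc'0, heq⟩ := h w (Finset.mem_erase.mpr ⟨hwm, hw⟩)
      have h1 := congrArg (coeff m) heq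
      have h2 := congrArg (coeff w) heq
      have hmw : m ≠ w := fun hh => hwm hh.symm
      simp only [hcf, coeff_add, coeff_C_mul, coeff_monomial, if_pos, if_neg hwm,
        if_neg hmw, ite_true, ite_self, if_true, eq_self_iff_true, add_zero, zero_add,
        mul_one] at h1 h2
      rw [h2, h1]
    · rw [Finset.notMem_union] at hw
      rw [MvPolynomial.notMem_support_iff.mp hw.1, MvPolynomial.notMem_support_iff.mp hw.2,
        mul_zero, mul_zero]

theorem stmt_6 {F : Type*} [Field F] [Algebra F (AlgebraicClosure ℚ)]
    {n : ℕ} (hn : 1 ≤ n)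
    (lam : Fin n → F) (hlam : ∀ i, lam i ≠ 0)
    (σ : MvPolynomial (Fin n) F ≃ₐ[F] MvPolynomial (Fin n) F)
    (hσ : ∀ i, σ (X i) = C (lam i) * X i)
    (m : Fin n →₀ ℕ) (p q : MvPolynomial (Fin n) F)
    (hpm : coeff m p = 1) (hqm : coeff m q = 1)
    (hlt : ∀ v ∈ p.support ∪ q.support, v ≠ m → grlexLt v m) :
    Spr σ p q = ⋂ v ∈ (p.support ∪ q.support).erase m,
      Spr σ (monomial m (1 : F) + monomial v (coeff v p))
            (monomial m (1 : F) + monomial v (coeff v q)) := by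
  exact stmt_6' hn lam hlam σ hσ m p q hpm hqm
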